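/- For every controlled Markov process and every finite horizon T ≥ 1, there exists a Markovian policy π* such that H(d_T^{π*}) equals the supremum of H(d_T^π) over all (possibly non-Markovian, possibly randomized) policies π; that is, a Markovian policy maximizes the entropy of the marginal state distribution over the class of all policies. -/

import Mathlib

open scoped BigOperators

/-- A controlled Markov process over finite state space `S` and action space `A`:
a transition kernel `P` and an initial distribution `μ`. -/
structure CMP (S A : Type) [Fintype S] [Fintype A] where
  P : S → A → S → ℝ
  P_nonneg : ∀ s a s', 0 ≤ P s a s'
  P_sum_one : ∀ s a, ∑ s', P s a s' = 1
  μ : S → ℝ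
  μ_nonneg : ∀ s, 0 ≤ μ s
  μ_sum_one : ∑ s, μ s = 1

/-- A history of `t` steps: states `s_0, …, s_t` and actions `a_0, …, a_{t-1}`. -/
abbrev Hist (S A : Type) (t : ℕ) : Type := (Fin (t + 1) → S) × (Fin t → A)

/-- A continuation of `k` further steps: actions `a_0, …, a_{k-1}` together with the
states those actions lead to. -/
abbrev Contin (S A : Type) (k : ℕ) : Type := (Fin k → A) × (Fin k → S)

/-- A general (possibly non-Markovian, possibly randomized) policy: for every time `t`
and history of length `t`, a probability distribution over actions. -/
structure Policy (S A : Type) [Fintype A] where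
  p : ∀ t : ℕ, Hist S A t → A → ℝ
  nonneg : ∀ t h a, 0 ≤ p t h a
  sum_one : ∀ t h, ∑ a, p t h a = 1

/-- A Markovian (randomized, time-dependent) policy: for every time `t` and current
state `s`, a probability distribution over actions. -/
structure MPolicy (S A : Type) [Fintype A] where
  p : ℕ → S → A → ℝ
  nonneg : ∀ t s a, 0 ≤ p t s a
  sum_one : ∀ t s, ∑ a, p t s a = 1

/-- The last (current) state of a history. -/
def lastState {S A : Type} {t : ℕ} (h : Hist S A t) : S := h.1 (Fin.last t)

/-- A Markovian policy viewed as a general policy. -/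
def MPolicy.toPolicy {S A : Type} [Fintype A] (m : MPolicy S A) : Policy S A where
  p := fun t h a => m.p t (lastState h) a
  nonneg := fun t h a => m.nonneg t _ a
  sum_one := fun t h => m.sum_one t _

/-- The general policy induced by a deterministic non-Markovian policy
(a function from histories to actions). -/
def detPolicy {S A : Type} [Fintype A] [DecidableEq A] (f : ∀ t : ℕ, Hist S A t → A) :
    Policy S A where
  p := fun t h a => if a = f t h then 1 else 0
  nonneg := by intro t h a; (try dsimp only); split <;> norm_num
  sum_one := by intro t h; simp

/-- The length-`i` prefix of a history. -/
def histTake {S A : Type} {t : ℕ} (h : Hist S A t) (i : ℕ) (hi : i ≤ t) : Hist S A i :=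
  (fun j => h.1 ⟨(j : ℕ), by have := j.isLt; omega⟩,
   fun j => h.2 ⟨(j : ℕ), by have := j.isLt; omega⟩)

/-- The probability that policy `π` generates the history `h` when interacting with
the CMP `M` (initial state from `μ`, actions from `π`, transitions from `P`). -/
noncomputable def histProb {S A : Type} [Fintype S] [Fintype A]
    (M : CMP S A) (π : Policy S A) {t : ℕ} (h : Hist S A t) : ℝ :=
  M.μ (h.1 0) * ∏ i : Fin t,
    (π.p i (histTake h i (Nat.le_of_lt i.isLt)) (h.2 i) *
      M.P (h.1 i.castSucc) (h.2 i) (h.1 i.succ))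

/-- The `t`-step state distribution `d_t^π(s) = Pr(s_t = s)`. -/
noncomputable def stateDist {S A : Type} [Fintype S] [Fintype A] [DecidableEq S]
    (M : CMP S A) (π : Policy S A) (t : ℕ) (s : S) : ℝ :=
  ∑ h : Hist S A t, if lastState h = s then histProb M π h else 0

/-- Shannon entropy of a distribution on a finite set (`0 log 0 = 0` since `Real.log 0 = 0`). -/
noncomputable def entropy {S : Type} [Fintype S] (d : S → ℝ) : ℝ :=
  -∑ s, d s * Real.log (d s)

/-- The state visitation frequency of a trajectory with `n+1` states. -/
noncomputable def visitFreq {S A : Type} [Fintype S] [DecidableEq S] {n : ℕ}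
    (h : Hist S A n) (s : S) : ℝ :=
  (∑ i : Fin (n + 1), if h.1 i = s then (1 : ℝ) else 0) / ((n : ℝ) + 1)

/-- The marginal state distribution `d_T^π(s) = (1/T) ∑_{t<T} d_t^π(s)`. -/
noncomputable def marginalDist {S A : Type} [Fintype S] [Fintype A] [DecidableEq S]
    (M : CMP S A) (π : Policy S A) (T : ℕ) (s : S) : ℝ :=
  (1 / (T : ℝ)) * ∑ t ∈ Finset.range T, stateDist M π t s

/-- The `γ`-discounted state distribution `d_γ^π(s) = (1-γ) ∑_t γ^t d_t^π(s)`. -/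
noncomputable def discountedDist {S A : Type} [Fintype S] [Fintype A] [DecidableEq S]
    (M : CMP S A) (π : Policy S A) (γ : ℝ) (s : S) : ℝ :=
  (1 - γ) * ∑' t : ℕ, γ ^ t * stateDist M π t s

/-- Concatenation of a length-`t` history with a `k`-step continuation. -/
def histAppend {S A : Type} {t k : ℕ} (h : Hist S A t) (c : Contin S A k) : Hist S A (t + k) :=
  (fun j => if hj : (j : ℕ) ≤ t then h.1 ⟨(j : ℕ), by omega⟩
            else c.2 ⟨(j : ℕ) - t - 1, by have := j.isLt; omega⟩,
   fun j => if hj : (j : ℕ) < t then h.2 ⟨(j : ℕ), hj⟩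
            else c.1 ⟨(j : ℕ) - t, by have := j.isLt; omega⟩)

/-- The probability that, after the prefix history `h`, running `π` (conditioned on the
full history) produces the `k`-step continuation `c`. -/
noncomputable def contProb {S A : Type} [Fintype S] [Fintype A]
    (M : CMP S A) (π : Policy S A) {t k : ℕ} (h : Hist S A t) (c : Contin S A k) : ℝ :=
  ∏ i : Fin k,
    (π.p (t + (i : ℕ))
        (histTake (histAppend h c) (t + (i : ℕ)) (by have := i.isLt; omega))
        ((histAppend h c).2 ⟨t + (i : ℕ), by have := i.isLt; omega⟩) *
      M.P ((histAppend h c).1 ⟨t + (i : ℕ), by have := i.isLt; omega⟩)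
        ((histAppend h c).2 ⟨t + (i : ℕ), by have := i.isLt; omega⟩)
        ((histAppend h c).1 ⟨t + (i : ℕ) + 1, by have := i.isLt; omega⟩))

/-- The expected entropy of the state visitation frequency of the completed trajectory,
when running `π` for `k` further steps after the prefix history `h`. -/
noncomputable def expEntFrom {S A : Type} [Fintype S] [Fintype A] [DecidableEq S]
    (M : CMP S A) (π : Policy S A) {t : ℕ} (k : ℕ) (h : Hist S A t) : ℝ :=
  ∑ c : Contin S A k, contProb M π h c * entropy (visitFreq (histAppend h c))

/-- A history has positive probability (under some policy) iff its initial state and all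
its transitions have positive probability. -/
def Reachable {S A : Type} [Fintype S] [Fintype A] (M : CMP S A) {t : ℕ}
    (h : Hist S A t) : Prop :=
  0 < M.μ (h.1 0) ∧ ∀ i : Fin t, 0 < M.P (h.1 i.castSucc) (h.2 i) (h.1 i.succ)

set_option linter.unusedSectionVars false
set_option linter.unusedVariables false

section AuxLemmas

variable {S A : Type} [Fintype S] [Fintype A] [DecidableEq S]

theorem snoc_val_lt {n : ℕ} {α : Type} (f : Fin n → α) (x : α) (j : Fin (n+1))
    (hj : (j : ℕ) < n) : (Fin.snoc f x : Fin (n+1) → α) j = f ⟨j, hj⟩ := by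
  unfold Fin.snoc
  rw [dif_pos hj]
  simp [Fin.castLT]

theorem snoc_val_eq {n : ℕ} {α : Type} (f : Fin n → α) (x : α) (j : Fin (n+1))
    (hj : (j : ℕ) = n) : (Fin.snoc f x : Fin (n+1) → α) j = x := by
  unfold Fin.snoc
  rw [dif_neg (by omega)]
  simp

/-- Append one action and one state to a history. -/
def snocHist {t : ℕ} (h : Hist S A t) (a : A) (s : S) : Hist S A (t + 1) :=
  (Fin.snoc h.1 s, Fin.snoc h.2 a)

def histEquiv (S A : Type) (t : ℕ) : Hist S A t × A × S ≃ Hist S A (t + 1) where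
  toFun := fun x => snocHist x.1 x.2.1 x.2.2
  invFun := fun h => ((Fin.init h.1, Fin.init h.2), h.2 (Fin.last t), h.1 (Fin.last (t+1)))
  left_inv := by
    rintro ⟨⟨f, g⟩, a, s⟩
    simp [snocHist, Fin.init_snoc, Fin.snoc_last]
  right_inv := by
    rintro ⟨f, g⟩
    simp [snocHist, Fin.snoc_init_self]

theorem lastState_snocHist {t : ℕ} (h : Hist S A t) (a : A) (s : S) :
    lastState (snocHist h a s) = s := by
  simp [lastState, snocHist]

theorem histTake_snocHist {t : ℕ} (h : Hist S A t) (a : A) (s : S) (i : ℕ)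
    (hi : i ≤ t + 1) (hi' : i ≤ t) :
    histTake (snocHist h a s) i hi = histTake h i hi' := by
  unfold histTake snocHist
  refine Prod.ext ?_ ?_
  · funext j
    exact snoc_val_lt _ _ _ (by show (j:ℕ) < t + 1; have := j.isLt; omega)
  · funext j
    exact snoc_val_lt _ _ _ (by show (j:ℕ) < t; have := j.isLt; omega)

theorem histTake_snocHist_self {t : ℕ} (h : Hist S A t) (a : A) (s : S) :
    histTake (snocHist h a s) t (by omega) = h := by
  unfold histTake snocHist
  refine Prod.ext ?_ ?_
  · funext j
    exact snoc_val_lt _ _ _ (by show (j:ℕ) < t + 1; have := j.isLt; omega)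
  · funext j
    exact snoc_val_lt _ _ _ (by show (j:ℕ) < t; have := j.isLt; omega)

theorem histProb_snocHist (M : CMP S A) (π : Policy S A) {t : ℕ} (h : Hist S A t)
    (a : A) (s : S) :
    histProb M π (snocHist h a s) =
      histProb M π h * (π.p t h a * M.P (lastState h) a s) := by
  unfold histProb
  rw [Fin.prod_univ_castSucc]
  have h0 : (snocHist h a s).1 0 = h.1 0 := by exact snoc_val_lt h.1 s 0 (by simp)
  have hfac : ∀ i : Fin t,
      (π.p (i.castSucc : Fin (t+1)) (histTake (snocHist h a s) (i.castSucc : Fin (t+1))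
          (Nat.le_of_lt (i.castSucc : Fin (t+1)).isLt)) ((snocHist h a s).2 i.castSucc) *
        M.P ((snocHist h a s).1 (i.castSucc : Fin (t+1)).castSucc)
          ((snocHist h a s).2 i.castSucc)
          ((snocHist h a s).1 (i.castSucc : Fin (t+1)).succ))
      = (π.p i (histTake h i (Nat.le_of_lt i.isLt)) (h.2 i) *
          M.P (h.1 i.castSucc) (h.2 i) (h.1 i.succ)) := by
    intro i
    have e2 : (snocHist h a s).2 i.castSucc = h.2 i := by
      simp [snocHist]
    have e1 : (snocHist h a s).1 (i.castSucc : Fin (t+1)).castSucc = h.1 i.castSucc :=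
      snoc_val_lt _ _ _ (by show (i:ℕ) < t + 1; omega)
    have e3 : (snocHist h a s).1 (i.castSucc : Fin (t+1)).succ = h.1 i.succ := by
      refine (snoc_val_lt _ _ _ ?_).trans ?_
      · show (i:ℕ) + 1 < t + 1
        omega
      · rfl
    have e4 : histTake (snocHist h a s) (i.castSucc : Fin (t+1))
        (Nat.le_of_lt (i.castSucc : Fin (t+1)).isLt) = histTake h i (Nat.le_of_lt i.isLt) :=
      histTake_snocHist h a s i (by have := i.isLt; omega) (Nat.le_of_lt i.isLt)
    rw [e2, e1, e3, e4]
    rfl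
  rw [Finset.prod_congr rfl (fun i _ => hfac i), h0]
  have elast2 : (snocHist h a s).2 (Fin.last t) = a := by simp [snocHist]
  have elast1 : (snocHist h a s).1 (Fin.last t).castSucc = lastState h := by
    refine (snoc_val_lt _ _ _ (by show (t:ℕ) < t + 1; omega)).trans ?_
    rfl
  have elast3 : (snocHist h a s).1 (Fin.last t).succ = s :=
    snoc_val_eq _ _ _ (by show (t:ℕ) + 1 = t + 1; rfl)
  have elast4 : histTake (snocHist h a s) (Fin.last t : Fin (t+1))
      (Nat.le_of_lt (Fin.last t : Fin (t+1)).isLt) = h := by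
    have := histTake_snocHist_self h a s
    exact this
  rw [elast2, elast1, elast3, elast4]
  simp only [Fin.val_last]
  ring

end AuxLemmas
section Aux2
variable {S A : Type} [Fintype S] [Fintype A] [DecidableEq S]

theorem histProb_nonneg (M : CMP S A) (π : Policy S A) {t : ℕ} (h : Hist S A t) :
    0 ≤ histProb M π h := by
  unfold histProb
  apply mul_nonneg (M.μ_nonneg _)
  apply Finset.prod_nonneg
  intro i _
  exact mul_nonneg (π.nonneg _ _ _) (M.P_nonneg _ _ _)

theorem stateDist_nonneg (M : CMP S A) (π : Policy S A) (t : ℕ) (s : S) :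
    0 ≤ stateDist M π t s := by
  unfold stateDist
  apply Finset.sum_nonneg
  intro h _
  split
  · exact histProb_nonneg M π h
  · exact le_rfl

/-- State-action occupancy at time `t`. -/
noncomputable def occ (M : CMP S A) (π : Policy S A) (t : ℕ) (s : S) (a : A) : ℝ :=
  ∑ h : Hist S A t, if lastState h = s then histProb M π h * π.p t h a else 0

theorem occ_nonneg (M : CMP S A) (π : Policy S A) (t : ℕ) (s : S) (a : A) :
    0 ≤ occ M π t s a := by
  apply Finset.sum_nonneg
  intro h _
  split
  · exact mul_nonneg (histProb_nonneg M π h) (π.nonneg _ _ _)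
  · exact le_rfl

theorem sum_occ (M : CMP S A) (π : Policy S A) (t : ℕ) (s : S) :
    ∑ a, occ M π t s a = stateDist M π t s := by
  unfold occ stateDist
  rw [Finset.sum_comm]
  refine Finset.sum_congr rfl fun h _ => ?_
  by_cases hs : lastState h = s
  · simp only [hs, if_true, ← Finset.mul_sum, π.sum_one, mul_one]
  · simp [hs]

theorem stateDist_succ (M : CMP S A) (π : Policy S A) (t : ℕ) (s' : S) :
    stateDist M π (t+1) s' = ∑ s, ∑ a, occ M π t s a * M.P s a s' := by
  unfold stateDist
  rw [← Equiv.sum_comp (histEquiv S A t)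
    (fun h => if lastState h = s' then histProb M π h else 0)]
  have key : ∀ x : Hist S A t × A × S,
      (if lastState (histEquiv S A t x) = s' then histProb M π (histEquiv S A t x) else 0)
      = if x.2.2 = s' then
          histProb M π x.1 * π.p t x.1 x.2.1 * M.P (lastState x.1) x.2.1 x.2.2 else 0 := by
    rintro ⟨h, a, s⟩
    show (if lastState (snocHist h a s) = s' then histProb M π (snocHist h a s) else 0) = _
    rw [lastState_snocHist, histProb_snocHist]
    ring_nf
  rw [Finset.sum_congr rfl fun x _ => key x]
  rw [Fintype.sum_prod_type]
  have lhs : ∀ h : Hist S A t, (∑ x : A × S, if x.2 = s' then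
      histProb M π h * π.p t h x.1 * M.P (lastState h) x.1 x.2 else 0)
      = ∑ a, histProb M π h * π.p t h a * M.P (lastState h) a s' := by
    intro h
    rw [Fintype.sum_prod_type]
    refine Finset.sum_congr rfl fun a _ => ?_
    exact Finset.sum_ite_eq' Finset.univ s' (fun x => histProb M π h * π.p t h a * M.P (lastState h) a x) |>.trans (by simp)
  rw [Finset.sum_congr rfl fun h _ => lhs h]
  -- RHS
  have rhs : ∀ s : S, ∀ a : A, occ M π t s a * M.P s a s'
      = ∑ h : Hist S A t, if lastState h = s then
          histProb M π h * π.p t h a * M.P (lastState h) a s' else 0 := by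
    intro s a
    unfold occ
    rw [Finset.sum_mul]
    refine Finset.sum_congr rfl fun h _ => ?_
    by_cases hs : lastState h = s
    · simp [hs]
    · simp [hs]
  have hr : (∑ s, ∑ a, occ M π t s a * M.P s a s')
      = ∑ s : S, ∑ a : A, ∑ h : Hist S A t, if lastState h = s then
          histProb M π h * π.p t h a * M.P (lastState h) a s' else 0 :=
    Finset.sum_congr rfl fun s _ => Finset.sum_congr rfl fun a _ => rhs s a
  rw [hr]
  have step1 : (∑ s : S, ∑ a : A, ∑ h : Hist S A t, if lastState h = s then
          histProb M π h * π.p t h a * M.P (lastState h) a s' else 0)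
      = ∑ h : Hist S A t, ∑ s : S, ∑ a : A, (if lastState h = s then
          histProb M π h * π.p t h a * M.P (lastState h) a s' else 0) := by
    exact (Finset.sum_congr rfl fun s _ => Finset.sum_comm).trans Finset.sum_comm
  rw [step1]
  refine Finset.sum_congr rfl fun h _ => ?_
  symm
  rw [Finset.sum_comm]
  refine Finset.sum_congr rfl fun a _ => ?_
  exact (Finset.sum_ite_eq Finset.univ (lastState h)
    (fun _ => histProb M π h * π.p t h a * M.P (lastState h) a s')).trans (by simp)

end Aux2
section Aux3
variable {S A : Type} [Fintype S] [Fintype A] [DecidableEq S]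

def histZeroEquiv (S A : Type) : S ≃ Hist S A 0 where
  toFun := fun s => (fun _ => s, Fin.elim0)
  invFun := fun h => h.1 0
  left_inv := fun s => rfl
  right_inv := by
    rintro ⟨f, g⟩
    refine Prod.ext ?_ ?_
    · funext j
      have : j = 0 := Fin.ext (by omega)
      simp [this]
    · funext j
      exact j.elim0

theorem stateDist_zero (M : CMP S A) (π : Policy S A) (s : S) :
    stateDist M π 0 s = M.μ s := by
  unfold stateDist
  rw [← Equiv.sum_comp (histZeroEquiv S A)
    (fun h => if lastState h = s then histProb M π h else 0)]
  have key : ∀ x : S, (if lastState (histZeroEquiv S A x) = s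
      then histProb M π (histZeroEquiv S A x) else 0) = if x = s then M.μ x else 0 := by
    intro x
    have h1 : lastState (histZeroEquiv S A x) = x := rfl
    have h2 : histProb M π (histZeroEquiv S A x) = M.μ x := by
      unfold histProb
      simp [histZeroEquiv]
    rw [h1, h2]
  rw [Finset.sum_congr rfl fun x _ => key x]
  exact (Finset.sum_ite_eq' Finset.univ s (fun x => M.μ x)).trans (by simp)

theorem occ_toPolicy (M : CMP S A) (m : MPolicy S A) (t : ℕ) (s : S) (a : A) :
    occ M m.toPolicy t s a = stateDist M m.toPolicy t s * m.p t s a := by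
  unfold occ stateDist
  rw [Finset.sum_mul]
  refine Finset.sum_congr rfl fun h _ => ?_
  by_cases hs : lastState h = s
  · simp only [hs, if_true]
    show histProb M m.toPolicy h * m.p t (lastState h) a = _
    rw [hs]
  · simp [hs]

/-- The Markovianization of a general policy. -/
noncomputable def markovize [Nonempty A] (M : CMP S A) (π : Policy S A) : MPolicy S A where
  p := fun t s a => if 0 < stateDist M π t s then occ M π t s a / stateDist M π t s
                    else (Fintype.card A : ℝ)⁻¹
  nonneg := by
    intro t s a
    split
    · exact div_nonneg (occ_nonneg M π t s a) (le_of_lt (by assumption))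
    · positivity
  sum_one := by
    intro t s
    by_cases hd : 0 < stateDist M π t s
    · simp only [hd, if_true]
      rw [← Finset.sum_div, sum_occ, div_self (ne_of_gt hd)]
    · simp only [hd, if_false]
      rw [Finset.sum_const, nsmul_eq_mul, Finset.card_univ,
        mul_inv_cancel₀ (by exact_mod_cast Fintype.card_ne_zero)]

theorem markovize_stateDist [Nonempty A] (M : CMP S A) (π : Policy S A) :
    ∀ t, stateDist M (markovize M π).toPolicy t = stateDist M π t := by
  intro t
  induction t with
  | zero => funext s; rw [stateDist_zero, stateDist_zero]
  | succ t ih =>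
    funext s'
    rw [stateDist_succ, stateDist_succ]
    refine Finset.sum_congr rfl fun s _ => Finset.sum_congr rfl fun a _ => ?_
    have hocc : occ M (markovize M π).toPolicy t s a = occ M π t s a := by
      rw [occ_toPolicy, ih]
      show stateDist M π t s * (if 0 < stateDist M π t s
        then occ M π t s a / stateDist M π t s else (Fintype.card A : ℝ)⁻¹) = _
      by_cases hd : 0 < stateDist M π t s
      · rw [if_pos hd, mul_div_cancel₀ _ (ne_of_gt hd)]
      · have hz : stateDist M π t s = 0 :=
          le_antisymm (not_lt.mp hd) (stateDist_nonneg M π t s)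
        have hoz : occ M π t s a = 0 := by
          have hle : occ M π t s a ≤ ∑ a, occ M π t s a :=
            Finset.single_le_sum (fun a _ => occ_nonneg M π t s a) (Finset.mem_univ a)
          rw [sum_occ, hz] at hle
          exact le_antisymm hle (occ_nonneg M π t s a)
        rw [hz, hoz, zero_mul]
    rw [hocc]

/-- State distribution dynamics for a Markovian policy table. -/
noncomputable def dyn (M : CMP S A) (p : ℕ → S → A → ℝ) : ℕ → S → ℝ
  | 0 => M.μ
  | (t+1) => fun s' => ∑ s, ∑ a, dyn M p t s * p t s a * M.P s a s'

theorem dyn_stateDist (M : CMP S A) (m : MPolicy S A) :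
    ∀ t, stateDist M m.toPolicy t = dyn M m.p t := by
  intro t
  induction t with
  | zero => funext s; rw [stateDist_zero]; rfl
  | succ t ih =>
    funext s'
    rw [stateDist_succ]
    show _ = ∑ s, ∑ a, dyn M m.p t s * m.p t s a * M.P s a s'
    refine Finset.sum_congr rfl fun s _ => Finset.sum_congr rfl fun a _ => ?_
    rw [occ_toPolicy, ih]

theorem dyn_continuous (M : CMP S A) (t : ℕ) (s : S) :
    Continuous (fun p : ℕ → S → A → ℝ => dyn M p t s) := by
  induction t generalizing s with
  | zero => exact continuous_const
  | succ t ih =>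
    show Continuous (fun p : ℕ → S → A → ℝ => ∑ s', ∑ a, dyn M p t s' * p t s' a * M.P s' a s)
    refine continuous_finset_sum _ fun s' _ => continuous_finset_sum _ fun a _ => ?_
    have hp : Continuous (fun p : ℕ → S → A → ℝ => p t s' a) :=
      (continuous_apply a).comp ((continuous_apply s').comp (continuous_apply t))
    exact ((ih s').mul hp).mul continuous_const

end Aux3
/-- for every horizon `T ≥ 1` there is a Markovian policy whose marginal
state distribution entropy attains the supremum over all (possibly non-Markovian,
possibly randomized) policies. -/
theorem markovian_maximizes_marginal_entropy
    {S A : Type} [Fintype S] [Fintype A] [Nonempty S] [Nonempty A] [DecidableEq S]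
    (M : CMP S A) (T : ℕ) (hT : 1 ≤ T) :
    ∃ π' : MPolicy S A,
      entropy (fun s => marginalDist M π'.toPolicy T s)
        = ⨆ π : Policy S A, entropy (fun s => marginalDist M π T s) := by
  classical
  set K : Set (ℕ → S → A → ℝ) :=
    Set.pi Set.univ (fun _ : ℕ => Set.pi Set.univ (fun _ : S => stdSimplex ℝ A)) with hKdef
  have hKc : IsCompact K :=
    isCompact_univ_pi fun _ => isCompact_univ_pi fun _ => isCompact_stdSimplex ℝ A
  have hmemK : ∀ m : MPolicy S A, m.p ∈ K := by
    intro m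
    rw [hKdef, Set.mem_univ_pi]
    intro t
    rw [Set.mem_univ_pi]
    intro s
    exact ⟨fun a => m.nonneg t s a, m.sum_one t s⟩
  -- objective on tables
  set G : (ℕ → S → A → ℝ) → S → ℝ :=
    fun p s => (1 / (T : ℝ)) * ∑ t ∈ Finset.range T, dyn M p t s with hGdef
  set F : (ℕ → S → A → ℝ) → ℝ := fun p => entropy (G p) with hFdef
  have hGcont : ∀ s, Continuous (fun p => G p s) := by
    intro s
    exact continuous_const.mul (continuous_finset_sum _ fun t _ => dyn_continuous M t s)
  have hFcont : Continuous F := by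
    rw [hFdef]
    unfold entropy
    exact (continuous_finset_sum _ fun s _ =>
      Real.continuous_mul_log.comp (hGcont s)).neg
  -- nonempty K
  have hKne : K.Nonempty := by
    refine ⟨(MPolicy.mk (fun _ _ _ => (Fintype.card A : ℝ)⁻¹) ?_ ?_).p, hmemK _⟩
    · intro t s a; positivity
    · intro t s
      rw [Finset.sum_const, nsmul_eq_mul, Finset.card_univ,
        mul_inv_cancel₀ (by exact_mod_cast Fintype.card_ne_zero)]
  obtain ⟨p0, hp0K, hp0max⟩ := hKc.exists_isMaxOn hKne hFcont.continuousOn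
  -- the maximizing Markovian policy
  set mstar : MPolicy S A :=
    { p := p0
      nonneg := fun t s a => (Set.mem_univ_pi.mp
        ((Set.mem_univ_pi.mp hp0K) t) s).1 a
      sum_one := fun t s => (Set.mem_univ_pi.mp
        ((Set.mem_univ_pi.mp hp0K) t) s).2 } with hmstar
  -- entropy of marginal for a Markovian policy is F of its table
  have ha : ∀ m : MPolicy S A,
      entropy (fun s => marginalDist M m.toPolicy T s) = F m.p := by
    intro m
    rw [hFdef]
    congr 1
    funext s
    unfold marginalDist
    rw [hGdef]
    dsimp only
    congr 1
    exact Finset.sum_congr rfl fun t _ => by rw [dyn_stateDist M m t]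
  -- markovization preserves the marginal entropy
  have hb : ∀ π : Policy S A,
      entropy (fun s => marginalDist M π T s)
        = entropy (fun s => marginalDist M (markovize M π).toPolicy T s) := by
    intro π
    congr 1
    funext s
    unfold marginalDist
    congr 1
    exact Finset.sum_congr rfl fun t _ => by rw [markovize_stateDist M π t]
  -- every policy's value is at most mstar's value
  have hbound : ∀ π : Policy S A,
      entropy (fun s => marginalDist M π T s)
        ≤ entropy (fun s => marginalDist M mstar.toPolicy T s) := by
    intro π
    rw [hb π, ha (markovize M π), ha mstar]
    exact hp0max (hmemK (markovize M π))
  haveI : Nonempty (Policy S A) := ⟨mstar.toPolicy⟩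
  have hbdd : BddAbove (Set.range fun π : Policy S A =>
      entropy (fun s => marginalDist M π T s)) := by
    refine ⟨entropy (fun s => marginalDist M mstar.toPolicy T s), ?_⟩
    rintro x ⟨π, rfl⟩
    exact hbound π
  refine ⟨mstar, le_antisymm ?_ ?_⟩
  · exact le_ciSup hbdd mstar.toPolicy
  · exact ciSup_le hbound
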